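/- In the border graph B(A) of a Wheeler DFA A, every node has out-degree at most 1: for every border (u_i, u_{i+1}) there is at most one border (u_j, u_{j+1}) such that ((u_i, u_{i+1}), (u_j, u_{j+1})) is an edge of B(A). Consequently B(A) has at most n−1 edges, where n = |Q|. -/
import Mathlib


/-- A Wheeler DFA over a linearly ordered state set `Q` (the Wheeler order)
and a linearly ordered alphabet `A`.  The transition function is partial
(`Option`-valued).  The three Wheeler axioms are part of the structure. -/
structure WDFA (Q A : Type) [LinearOrder Q] [LinearOrder A] where
  delta : Q → A → Option Q
  start : Q
  F : Set Q
  /-- Wheeler axiom (i): the initial state is minimum. -/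
  start_le : ∀ u, start ≤ u
  /-- Wheeler axiom (ii). -/
  w2 : ∀ {u v : Q} {a b : A} {u' v' : Q},
      delta u a = some u' → delta v b = some v' → a < b → u' < v'
  /-- Wheeler axiom (iii). -/
  w3 : ∀ {u v : Q} {a : A} {u' v' : Q},
      delta u a = some u' → delta v a = some v' → u < v → u' ≤ v'

namespace WDFA

variable {Q A : Type} [LinearOrder Q] [LinearOrder A]

/-- Extension of the (partial) transition function to strings. -/
def dhat (M : WDFA Q A) : Q → List A → Option Q
  | q, [] => some q
  | q, a :: w => (M.delta q a).bind (fun p => M.dhat p w)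

/-- `q` accepts the string `w`. -/
def Acc (M : WDFA Q A) (q : Q) (w : List A) : Prop :=
  ∃ p, M.dhat q w = some p ∧ p ∈ M.F

/-- Set of labels of outgoing edges of `q`. -/
def out (M : WDFA Q A) (q : Q) : Set A := {a | (M.delta q a).isSome}

/-- Myhill–Nerode state equivalence (with equal domains of definition). -/
def MN (M : WDFA Q A) (u v : Q) : Prop :=
  ∀ w : List A, (M.dhat u w).isSome = (M.dhat v w).isSome ∧ (M.Acc u w ↔ M.Acc v w)

/-- Myhill–Nerode state equivalence, acceptance-only version
(undefined counts as rejecting). -/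
def MNacc (M : WDFA Q A) (u v : Q) : Prop :=
  ∀ w : List A, M.Acc u w ↔ M.Acc v w

/-- `u` and `v` are adjacent in the Wheeler order. -/
def Adj (M : WDFA Q A) (u v : Q) : Prop :=
  u < v ∧ ∀ w : Q, ¬ (u < w ∧ w < v)

/-- `lam` is the incoming-label map: `lam start = ⊥` (the special symbol `#`)
and every transition entering `v` is labelled `lam v`. -/
def HasLam (M : WDFA Q A) (lam : Q → WithBot A) : Prop :=
  lam M.start = ⊥ ∧ ∀ u a v, M.delta u a = some v → lam v = (a : WithBot A)

/-- Every non-initial state has an incoming transition (reachability). -/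
def Reach1 (M : WDFA Q A) : Prop :=
  ∀ u, u ≠ M.start → ∃ p a, M.delta p a = some u

/-- Every state accepts some string (is final or reaches a final state). -/
def Coacc (M : WDFA Q A) : Prop := ∀ u, ∃ w, M.Acc u w

/-- The minimum-WDFA equivalence `≡`: `u` and `v` have the same incoming
label, are Myhill–Nerode equivalent, and so is every state between them in
the Wheeler order. -/
def Equ (M : WDFA Q A) (lam : Q → WithBot A) (u v : Q) : Prop :=
  lam u = lam v ∧ M.MN u v ∧
    ∀ w, min u v ≤ w → w ≤ max u v → lam w = lam u ∧ M.MN w u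

/-- `(u,v)` is a node of the border graph: adjacent states with equal
incoming labels. -/
def IsBorder (M : WDFA Q A) (lam : Q → WithBot A) (u v : Q) : Prop :=
  M.Adj u v ∧ lam u = lam v

/-- Edge relation of the border graph `B(A)`: there is an edge from the
border `x` to the border `y` whenever `x.1 = δ(y.1, λ(x.1))` and
`x.2 = δ(y.2, λ(x.1))`. -/
def EdgeZ (M : WDFA Q A) (lam : Q → WithBot A) : Q × Q → Q × Q → Prop :=
  fun x y => M.IsBorder lam x.1 x.2 ∧ M.IsBorder lam y.1 y.2 ∧
    ∃ a : A, lam x.1 = (a : WithBot A) ∧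
      M.delta y.1 a = some x.1 ∧ M.delta y.2 a = some x.2

/-- Transition function of the quotient automaton `A/st`
(`δ([u],a) = [δ(u,a)]`, implemented via representatives). -/
noncomputable def qdelta (M : WDFA Q A) (st : Setoid Q) (c : Quotient st) (a : A) :
    Option (Quotient st) :=
  (M.delta (Quotient.out c) a).map (Quotient.mk st)

/-- String extension of the quotient transition function. -/
noncomputable def qdhat (M : WDFA Q A) (st : Setoid Q) : Quotient st → List A → Option (Quotient st)
  | c, [] => some c
  | c, a :: w => (M.qdelta st c a).bind (fun d => M.qdhat st d w)

/-- The quotient automaton accepts `w`. -/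
def qAcc (M : WDFA Q A) (st : Setoid Q) (w : List A) : Prop :=
  ∃ c, M.qdhat st (Quotient.mk st M.start) w = some c ∧
    ∃ u ∈ M.F, Quotient.mk st u = c

/-- Order induced on `≡`-classes by the Wheeler order (classes are
intervals, so comparing arbitrary representatives is well defined). -/
def qle (st : Setoid Q) (c d : Quotient st) : Prop :=
  c = d ∨ ∀ u v : Q, Quotient.mk st u = c → Quotient.mk st v = d → u < v

end WDFA


lemma wdfa_adj_unique {Q A : Type} [LinearOrder Q] [LinearOrder A]
    (M : WDFA Q A) {u v v' : Q} (h : M.Adj u v) (h' : M.Adj u v') : v = v' := by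
  rcases lt_trichotomy v v' with hlt | heq | hgt
  · exact absurd ⟨h.1, hlt⟩ (h'.2 v)
  · exact heq
  · exact absurd ⟨h'.1, hgt⟩ (h.2 v')

lemma wdfa_edge_unique {Q A : Type} [LinearOrder Q] [LinearOrder A]
    (M : WDFA Q A) (lam : Q → WithBot A) {x y y' : Q × Q}
    (h : M.EdgeZ lam x y) (h' : M.EdgeZ lam x y') : y = y' := by
  obtain ⟨hxb, hyb, a, hla, hd1, hd2⟩ := h
  obtain ⟨_, hyb', a', hla', hd1', hd2'⟩ := h'
  have haa : a = a' := by
    have : (a : WithBot A) = (a' : WithBot A) := hla ▸ hla'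
    exact_mod_cast this
  subst haa
  have hx12 : x.1 < x.2 := hxb.1.1
  have h11 : y.1 = y'.1 := by
    rcases lt_trichotomy y.1 y'.1 with hlt | heq | hgt
    · -- y.2 ≤ y'.1
      have h2le : y.2 ≤ y'.1 := by
        by_contra hc
        exact hyb.1.2 y'.1 ⟨hlt, lt_of_not_ge hc⟩
      rcases lt_or_eq_of_le h2le with h2lt | h2eq
      · exact absurd (M.w3 hd2 hd1' h2lt) (not_le_of_gt hx12)
      · rw [h2eq, hd1'] at hd2
        exact absurd (Option.some_injective _ hd2) (ne_of_lt hx12)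
    · exact heq
    · have h2le : y'.2 ≤ y.1 := by
        by_contra hc
        exact hyb'.1.2 y.1 ⟨hgt, lt_of_not_ge hc⟩
      rcases lt_or_eq_of_le h2le with h2lt | h2eq
      · exact absurd (M.w3 hd2' hd1 h2lt) (not_le_of_gt hx12)
      · rw [h2eq, hd1] at hd2'
        exact absurd (Option.some_injective _ hd2') (ne_of_lt hx12)
  have h22 : y.2 = y'.2 := wdfa_adj_unique M hyb.1 (h11 ▸ hyb'.1)
  exact Prod.ext h11 h22

/-- in the border graph every node has out-degree at most one,
hence the border graph has at most `n - 1` edges. -/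
theorem wdfa_border_graph_size {Q A : Type} [LinearOrder Q] [LinearOrder A]
    [Fintype Q] (M : WDFA Q A) (lam : Q → WithBot A) (hlam : M.HasLam lam) :
    (∀ x y y' : Q × Q, M.EdgeZ lam x y → M.EdgeZ lam x y' → y = y') ∧
    {p : (Q × Q) × (Q × Q) | M.EdgeZ lam p.1 p.2}.ncard ≤ Fintype.card Q - 1 := by
  refine ⟨fun x y y' h h' => wdfa_edge_unique M lam h h', ?_⟩
  set S : Set ((Q × Q) × (Q × Q)) := {p | M.EdgeZ lam p.1 p.2} with hS
  rcases S.eq_empty_or_nonempty with he | hne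
  · simp [he]
  · have hQ : Nonempty Q := ⟨M.start⟩
    have huniv : (Finset.univ : Finset Q).Nonempty := Finset.univ_nonempty
    set m : Q := Finset.univ.max' huniv with hm
    have hmax : ∀ q : Q, q ≤ m := fun q => Finset.le_max' _ q (Finset.mem_univ q)
    have hmaps : ∀ p ∈ S, p.1.1 ∈ ({m}ᶜ : Set Q) := by
      intro p hp
      have hlt : p.1.1 < p.1.2 := hp.1.1.1
      have : p.1.1 < m := lt_of_lt_of_le hlt (hmax p.1.2)
      simpa using ne_of_lt this
    have hinj : Set.InjOn (fun p : (Q × Q) × (Q × Q) => p.1.1) S := by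
      intro p hp p' hp' heq0
      have heq : p.1.1 = p'.1.1 := heq0
      have h1 : p.1 = p'.1 := by
        have h2 : p.1.2 = p'.1.2 := wdfa_adj_unique M hp.1.1 (heq ▸ hp'.1.1)
        exact Prod.ext heq h2
      have h2 : p.2 = p'.2 := wdfa_edge_unique M lam (h1 ▸ hp) hp'
      exact Prod.ext h1 h2
    have hle : S.ncard ≤ ({m}ᶜ : Set Q).ncard :=
      Set.ncard_le_ncard_of_injOn _ hmaps hinj (Set.toFinite _)
    have hcompl : ({m}ᶜ : Set Q).ncard = Fintype.card Q - 1 := by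
      have h := Set.ncard_add_ncard_compl ({m} : Set Q)
      simp [Set.ncard_singleton, Set.ncard_univ, Nat.card_eq_fintype_card] at h
      omega
    omega
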